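/- If the average mixing matrix of the continuous quantum walk on a reversible ergodic Markov chain equals (1/n)J (average uniform mixing), then the average mixing matrix of the Szegedy quantum walk also equals (1/n)J. -/

import Mathlib

open Matrix BigOperators

lemma had_sq_posSemidef {n : ℕ} (E : Matrix (Fin n) (Fin n) ℝ)
    (hs : E.IsSymm) (hi : E * E = E) : (E.hadamard E).PosSemidef := by
  have hsymm' : ∀ i j, E i j = E j i := fun i j => by
    conv_lhs => rw [← hs]
    rfl
  have hE : ∀ a b, E a b = ∑ i, E i a * E i b := by
    intro a b
    conv_lhs => rw [← hi]
    rw [Matrix.mul_apply]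
    exact Finset.sum_congr rfl fun i _ => by rw [hsymm' a i]
  have key : E.hadamard E =
      (Matrix.of fun (p : Fin n × Fin n) a => E p.1 a * E p.2 a)ᴴ *
      (Matrix.of fun (p : Fin n × Fin n) a => E p.1 a * E p.2 a) := by
    ext a b
    simp only [Matrix.mul_apply, Matrix.hadamard_apply, Matrix.conjTranspose_apply,
      Matrix.of_apply, star_trivial]
    rw [Fintype.sum_prod_type, hE a b, Finset.sum_mul_sum]
    exact Finset.sum_congr rfl fun i _ => Finset.sum_congr rfl fun j _ => by ring
  rw [key]
  exact Matrix.posSemidef_conjTranspose_mul_self _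

theorem continuous_uniform_mixing_implies_szegedy
    (n m : ℕ)
    (P : Matrix (Fin n) (Fin n) ℝ)
    (hP_nonneg : ∀ x y, 0 ≤ P x y)
    (hP_stoch : ∀ x, ∑ y, P x y = 1)
    (π : Fin n → ℝ)
    (hπ_pos : ∀ x, 0 < π x)
    (hπ_sum : ∑ x, π x = 1)
    (hπ_stat : ∀ y, ∑ x, π x * P x y = π y)
    (hrev : ∀ x y, π x * P x y = π y * P y x)
    (D : Matrix (Fin n) (Fin n) ℝ)
    (hD : ∀ x y, D x y = Real.sqrt (P x y * P y x))
    (lam : Fin (m + 1) → ℝ)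
    (hlam_inj : Function.Injective lam)
    (hlam_one : lam 0 = 1)
    (hlam_ne_negone : ∀ r, lam r ≠ -1)
    (E : Fin (m + 1) → Matrix (Fin n) (Fin n) ℝ)
    (hdecomp : D = ∑ r, lam r • E r)
    (horth : ∀ r s, r ≠ s → E r * E s = 0)
    (hidem : ∀ r, E r * E r = E r)
    (hsymm : ∀ r, (E r).IsSymm)
    (hsum : ∑ r, E r = 1)
    (huniform : ∑ r, (E r).hadamard (E r) = (n : ℝ)⁻¹ • Matrix.of fun _ _ => (1 : ℝ)) :
    ∑ r, (E r).hadamard (E r)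
      + (1 / 2 : ℝ) • ((Pᵀ - 1) *
          ∑ r ∈ Finset.univ.erase 0, (1 / (1 - lam r ^ 2)) • (E r).hadamard (E r))
      = (n : ℝ)⁻¹ • Matrix.of fun _ _ => (1 : ℝ) := by
  classical
  -- n is positive
  have hn : 0 < n := by
    by_contra h
    push_neg at h
    interval_cases n
    simp at hπ_sum
  set x0 : Fin n := ⟨0, hn⟩ with hx0
  have hsymm' : ∀ r i j, E r i j = E r j i := fun r i j => by
    conv_lhs => rw [← hsymm r]
    rfl
  set A : Fin (m + 1) → Matrix (Fin n) (Fin n) ℝ := fun r => (E r).hadamard (E r) with hA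
  have hApsd : ∀ r, (A r).PosSemidef := fun r => had_sq_posSemidef _ (hsymm r) (hidem r)
  -- Step 1: each A r kills mean-zero vectors
  have hAv : ∀ r (v : Fin n → ℝ), (∑ y, v y = 0) → A r *ᵥ v = 0 := by
    intro r v hv
    have hJv : (∑ s, A s) *ᵥ v = 0 := by
      rw [huniform]
      ext x
      simp only [Matrix.mulVec, Matrix.smul_apply, dotProduct, Matrix.of_apply, smul_eq_mul,
        one_mul, Pi.zero_apply]
      rw [← Finset.mul_sum, hv, mul_zero]
    have hsum_mv : (∑ s, A s) *ᵥ v = ∑ s, A s *ᵥ v := by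
      ext x
      simp [Matrix.mulVec, dotProduct, Matrix.sum_apply, Finset.sum_mul]
      rw [Finset.sum_comm]
    have hzero : ∑ s, v ⬝ᵥ (A s *ᵥ v) = 0 := by
      have : v ⬝ᵥ ((∑ s, A s) *ᵥ v) = 0 := by rw [hJv, dotProduct_zero]
      rw [hsum_mv] at this
      rw [← this]
      simp [dotProduct, Finset.sum_apply, Finset.mul_sum]
      rw [Finset.sum_comm]
    have hnonneg : ∀ s ∈ Finset.univ, 0 ≤ v ⬝ᵥ (A s *ᵥ v) := by
      intro s _
      have := (hApsd s).dotProduct_mulVec_nonneg v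
      simpa using this
    have hz : v ⬝ᵥ (A r *ᵥ v) = 0 :=
      (Finset.sum_eq_zero_iff_of_nonneg hnonneg).mp hzero r (Finset.mem_univ r)
    have := ((hApsd r).dotProduct_mulVec_zero_iff v).mp (by simpa using hz)
    exact this
  -- Step 2: each A r is constant
  have hconst : ∀ r x y, A r x y = A r x0 x0 := by
    intro r x y
    have hcols : ∀ (x a b : Fin n), A r x a = A r x b := by
      intro x a b
      rcases eq_or_ne a b with h | h
      · rw [h]
      set v : Fin n → ℝ := fun y => (if y = a then (1:ℝ) else 0) - (if y = b then 1 else 0)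
        with hvdef
      have hv : (∑ y, v y) = 0 := by
        simp [hvdef, Finset.sum_sub_distrib]
      have h0 := congrFun (hAv r v hv) x
      simp only [Matrix.mulVec, dotProduct, hvdef, Pi.zero_apply, mul_sub, mul_ite, mul_one,
        mul_zero, Finset.sum_sub_distrib, Finset.sum_ite_eq', Finset.mem_univ, if_true] at h0
      linarith
    have hAsymm : ∀ x y, A r x y = A r y x := by
      intro x y
      simp only [hA, Matrix.hadamard_apply, hsymm' r x y]
    calc A r x y = A r x x0 := hcols x y x0
      _ = A r x0 x := hAsymm x x0
      _ = A r x0 x0 := hcols x0 x x0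
  set c : Fin (m + 1) → ℝ := fun r => A r x0 x0 with hc
  -- Step 3: u = sqrt π is fixed by E 0
  set u : Fin n → ℝ := fun x => Real.sqrt (π x) with hu
  have hu_pos : ∀ x, 0 < u x := fun x => Real.sqrt_pos.mpr (hπ_pos x)
  have hDu : D *ᵥ u = u := by
    ext x
    simp only [Matrix.mulVec, dotProduct]
    have hterm : ∀ y, D x y * u y = u x * P x y := by
      intro y
      rw [hD, hu]
      rw [← Real.sqrt_mul (mul_nonneg (hP_nonneg x y) (hP_nonneg y x))]
      have : P x y * P y x * π y = π x * (P x y * P x y) := by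
        have h1 : π y * P y x = π x * P x y := (hrev x y).symm
        linear_combination P x y * h1
      rw [this, Real.sqrt_mul (le_of_lt (hπ_pos x))]
      rw [Real.sqrt_mul_self (hP_nonneg x y)]
    simp only [hterm]
    rw [← Finset.mul_sum, hP_stoch x, mul_one]
  have hEsD : ∀ s, E s * D = lam s • E s := by
    intro s
    rw [hdecomp, Finset.mul_sum]
    rw [Finset.sum_eq_single s]
    · rw [Matrix.mul_smul, hidem]
    · intro r _ hr
      rw [Matrix.mul_smul, horth s r (Ne.symm hr), smul_zero]
    · simp
  have hEsu : ∀ s, s ≠ 0 → E s *ᵥ u = 0 := by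
    intro s hs
    have h1 : E s *ᵥ u = lam s • (E s *ᵥ u) := by
      conv_lhs => rw [← hDu, Matrix.mulVec_mulVec, hEsD s, Matrix.smul_mulVec]
    have hls : lam s ≠ 1 := by
      intro h
      exact hs (hlam_inj (h.trans hlam_one.symm))
    have h2 : (1 - lam s) • (E s *ᵥ u) = 0 := by
      rw [sub_smul, one_smul]
      nth_rewrite 1 [h1]
      exact sub_self _
    have h3 : (1 - lam s) ≠ 0 := sub_ne_zero.mpr (Ne.symm hls)
    exact (smul_eq_zero.mp h2).resolve_left h3
  have hE0u : E 0 *ᵥ u = u := by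
    have hsum_mv : (∑ r, E r) *ᵥ u = ∑ r, E r *ᵥ u := by
      ext x
      simp [Matrix.mulVec, dotProduct, Matrix.sum_apply, Finset.sum_mul]
      rw [Finset.sum_comm]
    have h1 : ∑ r, E r *ᵥ u = u := by
      rw [← hsum_mv, hsum, Matrix.one_mulVec]
    have h2 : ∑ r, E r *ᵥ u = E 0 *ᵥ u :=
      Finset.sum_eq_single 0 (fun r _ hr => hEsu r hr) (by simp)
    rw [← h2, h1]
  -- Step 4: c 0 = 1/n², |E 0 x y| = 1/n
  have hE0sq : ∀ x y, E 0 x y * E 0 x y = c 0 := by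
    intro x y
    have := hconst 0 x y
    simpa [hA, hc, Matrix.hadamard_apply] using this
  have hc0_nonneg : 0 ≤ c 0 := by
    rw [← hE0sq x0 x0]; exact mul_self_nonneg _
  have hdiag : ∀ x, E 0 x x = n * c 0 := by
    intro x
    have := congrFun (congrFun (hidem 0) x) x
    rw [Matrix.mul_apply] at this
    have h2 : ∀ z, E 0 x z * E 0 z x = c 0 := by
      intro z
      rw [hsymm' 0 z x]
      exact hE0sq x z
    rw [Finset.sum_congr rfl (fun z _ => h2 z)] at this
    rw [Finset.sum_const, Finset.card_univ, Fintype.card_fin] at this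
    rw [← this, nsmul_eq_mul]
  have hc0_eq : c 0 = ((n : ℝ) * n)⁻¹ := by
    have h1 : (n : ℝ) * c 0 * ((n : ℝ) * c 0) = c 0 := by
      rw [← hdiag x0, hE0sq x0 x0]
    have hc0_ne : c 0 ≠ 0 := by
      intro h
      have hE00 : E 0 = 0 := by
        ext x y
        have := hE0sq x y
        rw [h] at this
        exact mul_self_eq_zero.mp this
      have := hE0u
      rw [hE00] at this
      have := congrFun this x0
      simp at this
      exact absurd this.symm (ne_of_gt (hu_pos x0))
    have hnne : (n : ℝ) ≠ 0 := Nat.cast_ne_zero.mpr hn.ne'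
    have h4 : c 0 * ((n:ℝ) * n * c 0 - 1) = 0 := by linear_combination h1
    have h5 : (n:ℝ) * n * c 0 = 1 := by
      have := (mul_eq_zero.mp h4).resolve_left hc0_ne
      linarith
    have h5' : c 0 * ((n:ℝ) * n) = 1 := by linear_combination h5
    exact eq_inv_of_mul_eq_one_left h5'
  have hE0abs : ∀ x y, E 0 x y ≤ (n : ℝ)⁻¹ := by
    intro x y
    have h1 : E 0 x y * E 0 x y = ((n:ℝ)⁻¹) * ((n:ℝ)⁻¹) := by
      rw [hE0sq x y, hc0_eq, mul_inv]
    have hnpos : (0:ℝ) < (n:ℝ)⁻¹ := by positivity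
    nlinarith
  -- Step 5: u is constant, π uniform, P doubly stochastic
  set s : ℝ := ∑ x, u x with hs
  have hule : ∀ x, u x ≤ s / n := by
    intro x
    have h1 : u x = ∑ y, E 0 x y * u y := by
      have := congrFun hE0u x
      simp only [Matrix.mulVec, dotProduct] at this
      exact this.symm
    have h2 : ∑ y, E 0 x y * u y ≤ ∑ y, (n:ℝ)⁻¹ * u y := by
      apply Finset.sum_le_sum
      intro y _
      exact mul_le_mul_of_nonneg_right (hE0abs x y) (hu_pos y).le
    rw [h1]
    calc ∑ y, E 0 x y * u y ≤ ∑ y, (n:ℝ)⁻¹ * u y := h2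
      _ = s / n := by rw [← Finset.mul_sum, ← hs, inv_mul_eq_div]
  have huconst : ∀ x, u x = s / n := by
    intro x
    by_contra h
    have hlt : u x < s / n := lt_of_le_of_ne (hule x) h
    have hstrict : ∑ y, u y < ∑ _y : Fin n, s / n :=
      Finset.sum_lt_sum (fun i _ => hule i) ⟨x, Finset.mem_univ x, hlt⟩
    rw [Finset.sum_const, Finset.card_univ, Fintype.card_fin] at hstrict
    have : (n : ℝ) * (s / n) = s := by
      field_simp
    rw [nsmul_eq_mul, this] at hstrict
    exact absurd hstrict (lt_irrefl s)
  have hπconst : ∀ x, π x = (s / n) ^ 2 := by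
    intro x
    have : π x = u x ^ 2 := (Real.sq_sqrt (hπ_pos x).le).symm
    rw [this, huconst x]
  have hcolsum : ∀ y, ∑ x, P x y = 1 := by
    intro y
    have h1 := hπ_stat y
    have h2 : ∀ x, π x * P x y = (s/n)^2 * P x y := fun x => by rw [hπconst x]
    rw [Finset.sum_congr rfl (fun x _ => h2 x), ← Finset.mul_sum, hπconst y] at h1
    have hpos : (0:ℝ) < (s/n)^2 := by
      rw [← hπconst x0]; exact hπ_pos x0
    exact mul_left_cancel₀ (ne_of_gt hpos) (h1.trans (mul_one ((s/n)^2)).symm)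
  -- Step 6: (Pᵀ - 1) * J = 0
  have hJkill : (Pᵀ - 1) * (Matrix.of fun _ _ => (1:ℝ)) = 0 := by
    ext x y
    simp only [Matrix.mul_apply, Matrix.sub_apply, Matrix.transpose_apply, Matrix.of_apply,
      mul_one, Matrix.zero_apply, Finset.sum_sub_distrib]
    rw [hcolsum x]
    simp [Matrix.one_apply, Finset.sum_ite_eq]
  -- Step 7: assemble
  have hAr : ∀ r, A r = c r • (Matrix.of fun _ _ => (1:ℝ)) := by
    intro r
    ext x y
    simp only [Matrix.smul_apply, Matrix.of_apply, smul_eq_mul, mul_one]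
    exact hconst r x y
  have hSsum : ∑ r ∈ Finset.univ.erase 0, (1 / (1 - lam r ^ 2)) • A r
      = (∑ r ∈ Finset.univ.erase 0, (1 / (1 - lam r ^ 2)) * c r) • (Matrix.of fun _ _ => (1:ℝ)) := by
    rw [Finset.sum_smul]
    apply Finset.sum_congr rfl
    intro r _
    rw [hAr r, smul_smul]
  rw [hSsum, Matrix.mul_smul, hJkill, smul_zero, smul_zero, add_zero]
  exact huniform
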